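/- For the r-ary parity substitution τₙ[⊕_r] of a minimally unsatisfiable CNF τₙ containing all n variables, the column-major order π on the substituted variables y_{i,j} (ordering first by j, then by i) is ((r−2)n)-robust. -/
import Mathlib


abbrev Var := ℕ
abbrev Lit := Var × Bool
abbrev Clause := Finset Lit

def Clause.vars (C : Clause) : Finset Var := C.image Prod.fst

abbrev Assignment := Var → Option Bool

def litSat (σ : Assignment) (l : Lit) : Prop := σ l.1 = some l.2
def litFalse (σ : Assignment) (l : Lit) : Prop := σ l.1 = some (!l.2)

def Clause.falsified (σ : Assignment) (C : Clause) : Prop := ∀ l ∈ C, litFalse σ l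

def resolve (x : Var) (C D : Clause) : Clause :=
  C.filter (fun l => l.1 ≠ x) ∪ D.filter (fun l => l.1 ≠ x)

def resolvableOn (x : Var) (C D : Clause) : Prop :=
  (∃ a : Bool, (x, a) ∈ C ∧ (x, !a) ∈ D) ∧
    ∀ (y : Var) (b : Bool), y ≠ x → (y, b) ∈ C → (y, !b) ∉ D
def satisfiesC (α : Var → Bool) (C : Clause) : Prop := ∃ l ∈ C, α l.1 = l.2

def Unsat (τ : Set Clause) : Prop := ∀ α : Var → Bool, ∃ C ∈ τ, ¬ satisfiesC α C

def MinUnsat (τ : Set Clause) : Prop :=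
  Unsat τ ∧ ∀ τ' : Set Clause, τ' ⊂ τ → ∃ α : Var → Bool, ∀ C ∈ τ', satisfiesC α C
def VarPw (n w : ℕ) (π : Var → ℕ) : Set Var := {x | x < n ∧ π x < w}

def clSatBy (σ : Assignment) (C : Clause) : Prop := ∃ l ∈ C, litSat σ l

def restrictClause (σ : Assignment) (C : Clause) : Clause :=
  C.filter (fun l => σ l.1 = none)

def restrictCNF (σ : Assignment) (τ : Set Clause) : Set Clause :=
  {D | ∃ C ∈ τ, ¬ clSatBy σ C ∧ D = restrictClause σ C}

def Robust (n w : ℕ) (π : Var → ℕ) (τ : Set Clause) : Prop :=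
  ∀ σ : Assignment, (∀ x : Var, σ x ≠ none → x < n) →
    ({x : Var | σ x ≠ none ∧ x ∉ VarPw n w π}).Subsingleton →
    MinUnsat (restrictCNF σ τ) ∧
      ∀ x : Var, σ x ≠ none → ∃ C ∈ τ, ¬ clSatBy σ C ∧ x ∈ Clause.vars C

/-- The CNF encoding of the r-ary parity substitution τ[⊕_r]: each variable `i < n`
is replaced by the XOR of the fresh variables `y_{i,j}`, encoded as `j*n + i`
(so that the identity order on ℕ is exactly the column-major order). -/
def ParitySub (n r : ℕ) (τ : Set Clause) : Set Clause :=
  {D | ∃ C ∈ τ, ∃ c : Var → Fin r → Bool,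
    (∀ l ∈ C, ((Finset.univ : Finset (Fin r)).filter (fun j => c l.1 j = true)).card % 2
        = (if l.2 then 0 else 1)) ∧
    D = C.biUnion (fun l =>
      (Finset.univ : Finset (Fin r)).image (fun j : Fin r => (j.val * n + l.1, ! c l.1 j)))}

open Finset

lemma card_filter_bool {r : ℕ} (v : Fin r → Bool) :
    ((univ : Finset (Fin r)).filter (fun j => v j = true)).card = ∑ j, (v j).toNat := by
  rw [Finset.card_filter]
  exact Finset.sum_congr rfl (fun j _ => by cases v j <;> simp)

lemma exists_update_par {r : ℕ} (J : Fin r) (v : Fin r → Bool) (t : ℕ) (ht : t ≤ 1) :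
    ∃ b : Bool, ((univ : Finset (Fin r)).filter
        (fun j => Function.update v J b j = true)).card % 2 = t := by
  have key : ∀ b : Bool, ((univ : Finset (Fin r)).filter
      (fun j => Function.update v J b j = true)).card
      = b.toNat + ∑ j ∈ univ.erase J, (v j).toNat := by
    intro b
    rw [card_filter_bool, ← Finset.add_sum_erase _ _ (mem_univ J)]
    simp only [Function.update_self]
    congr 1
    exact Finset.sum_congr rfl (fun j hj => by
      rw [Function.update_of_ne (Finset.ne_of_mem_erase hj)])
  set T := ∑ j ∈ univ.erase J, (v j).toNat with hT
  refine ⟨decide ((T + t) % 2 = 1), ?_⟩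
  rw [key]
  by_cases h : (T + t) % 2 = 1 <;> simp [h] <;> omega

lemma mem_expansion {n r : ℕ} {C : Clause} {c : Var → Fin r → Bool} {l : Lit} :
    l ∈ C.biUnion (fun l' => (Finset.univ : Finset (Fin r)).image
        (fun j : Fin r => (j.val * n + l'.1, ! c l'.1 j)))
    ↔ ∃ l' ∈ C, ∃ j : Fin r, l = (j.val * n + l'.1, ! c l'.1 j) := by
  simp only [Finset.mem_biUnion, Finset.mem_image, Finset.mem_univ, true_and]
  constructor
  · rintro ⟨l', hl', j, rfl⟩; exact ⟨l', hl', j, rfl⟩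
  · rintro ⟨l', hl', j, rfl⟩; exact ⟨l', hl', j, rfl⟩

lemma bool_ne_iff {a b : Bool} (h : a ≠ b) : b = !a := by
  cases a <;> cases b <;> simp_all

lemma no_taut {τ : Set Clause} (hmin : MinUnsat τ) {C : Clause} (hC : C ∈ τ) (i : Var) :
    ¬((i, true) ∈ C ∧ (i, false) ∈ C) := by
  rintro ⟨h1, h0⟩
  obtain ⟨α, hα⟩ := hmin.2 (τ \ {C}) (Set.sdiff_singleton_ssubset.mpr hC)
  obtain ⟨C', hC', hns⟩ := hmin.1 α
  apply hns
  by_cases hc : C' = C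
  · subst hc
    cases h : α i
    · exact ⟨(i, false), h0, h⟩
    · exact ⟨(i, true), h1, h⟩
  · exact hα C' ⟨hC', hc⟩

lemma crit {τ : Set Clause} (hmin : MinUnsat τ) {C₀ : Clause} (hC₀ : C₀ ∈ τ) :
    ∃ a : Var → Bool, (∀ C ∈ τ, C ≠ C₀ → satisfiesC a C) ∧ ∀ l ∈ C₀, a l.1 ≠ l.2 := by
  obtain ⟨a, ha⟩ := hmin.2 (τ \ {C₀}) (Set.sdiff_singleton_ssubset.mpr hC₀)
  refine ⟨a, fun C hC hne => ha C ⟨hC, hne⟩, ?_⟩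
  have hC0 : ¬ satisfiesC a C₀ := by
    obtain ⟨C', hC', hns⟩ := hmin.1 a
    by_cases h : C' = C₀
    · rwa [h] at hns
    · exact absurd (ha C' ⟨hC', h⟩) hns
  intro l hl he
  exact hC0 ⟨l, hl, he⟩

theorem stmt_15 (n r : ℕ) (hr : 2 ≤ r) (τ : Set Clause)
    (hmin : MinUnsat τ)
    (hvars : ∀ C ∈ τ, ∀ y ∈ Clause.vars C, y < n)
    (hall : ∀ y : Var, y < n → ∃ C ∈ τ, y ∈ Clause.vars C) :
    Robust (r * n) ((r - 2) * n) id (ParitySub n r τ) := by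
  intro σ hσ1 hσ2
  -- every group has a free (unassigned) column
  have freeCol : ∀ i, i < n → ∃ j : Fin r, σ (j.val * n + i) = none := by
    intro i hi
    by_contra hcon
    push_neg at hcon
    have hn : 0 < n := by omega
    have h2 : r - 2 < r := by omega
    have h1 : r - 1 < r := by omega
    have hm : ∀ x : Var, σ x ≠ none → (r - 2) * n ≤ x →
        x ∈ {x : Var | σ x ≠ none ∧ x ∉ VarPw (r * n) ((r - 2) * n) id} := by
      intro x h hle
      exact ⟨h, fun hmem => absurd hmem.2 (by simpa using Nat.not_lt.mpr hle)⟩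
    have e := hσ2 (hm ((r - 2) * n + i) (hcon ⟨r - 2, h2⟩) (Nat.le_add_right _ _))
      (hm ((r - 1) * n + i) (hcon ⟨r - 1, h1⟩)
        (le_trans (Nat.mul_le_mul_right n (by omega)) (Nat.le_add_right _ _)))
    have hlt : (r - 2) * n < (r - 1) * n := Nat.mul_lt_mul_of_lt_of_le (by omega) le_rfl hn
    have e' : (r - 2) * n + i = (r - 1) * n + i := e
    omega
  -- parity-adjustable σ-consistent group assignment
  have chooser : ∀ (i : ℕ), i < n → ∀ t : ℕ, t ≤ 1 → ∃ g : Fin r → Bool,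
      (((univ : Finset (Fin r)).filter (fun j => g j = true)).card % 2 = t) ∧
      ∀ (j : Fin r) (v : Bool), σ (j.val * n + i) = some v → g j = v := by
    intro i hi t ht
    obtain ⟨J, hJ⟩ := freeCol i hi
    set base : Fin r → Bool := fun j => (σ (j.val * n + i)).getD false with hbase
    obtain ⟨b, hb⟩ := exists_update_par J base t ht
    refine ⟨Function.update base J b, hb, ?_⟩
    intro j v hv
    by_cases hjJ : j = J
    · subst hjJ; rw [hJ] at hv; cases hv
    · rw [Function.update_of_ne hjJ, hbase]; simp [hv]
  -- σ-consistency forced by non-satisfaction of an expansion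
  have hconsGen : ∀ (C : Clause) (c : Var → Fin r → Bool),
      ¬ clSatBy σ (C.biUnion (fun l => (Finset.univ : Finset (Fin r)).image
        (fun j : Fin r => (j.val * n + l.1, ! c l.1 j)))) →
      ∀ i ∈ Clause.vars C, ∀ (j : Fin r) (v : Bool), σ (j.val * n + i) = some v → c i j = v := by
    intro C c hns i hiC j v hv
    obtain ⟨l', hl', hfst⟩ := Finset.mem_image.mp hiC
    by_contra hne
    apply hns
    refine ⟨(j.val * n + l'.1, ! c l'.1 j), mem_expansion.mpr ⟨l', hl', j, rfl⟩, ?_⟩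
    show σ (j.val * n + l'.1) = some (! c l'.1 j)
    rw [hfst, hv]
    exact congrArg some (bool_ne_iff hne)
  constructor
  · constructor
    · -- Unsat of the restriction
      intro α
      set β : Var → Bool := fun x => (σ x).getD (α x) with hβ
      set a : Var → Bool := fun i =>
        decide ((((univ : Finset (Fin r)).filter
          (fun j => β (j.val * n + i) = true)).card % 2 = 1)) with ha
      obtain ⟨C, hC, hns⟩ := hmin.1 a
      set c : Var → Fin r → Bool := fun i j => β (j.val * n + i) with hc
      set E := C.biUnion (fun l => (Finset.univ : Finset (Fin r)).image
        (fun j : Fin r => (j.val * n + l.1, ! c l.1 j))) with hE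
      have hcond : ∀ l ∈ C, ((Finset.univ : Finset (Fin r)).filter
          (fun j => c l.1 j = true)).card % 2 = (if l.2 then 0 else 1) := by
        rintro ⟨i, b⟩ hl
        have hna : a i ≠ b := fun h => hns ⟨(i, b), hl, h⟩
        have hlt : ((univ : Finset (Fin r)).filter
            (fun j => β (j.val * n + i) = true)).card % 2 < 2 := Nat.mod_lt _ (by norm_num)
        cases b
        · have hat : a i = true := by
            cases h : a i
            · exact absurd h hna
            · rfl
          have hP : ((univ : Finset (Fin r)).filter
              (fun j => β (j.val * n + i) = true)).card % 2 = 1 := by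
            simp only [ha] at hat
            exact of_decide_eq_true hat
          simpa [hc] using hP
        · have haf : a i = false := by
            cases h : a i
            · rfl
            · exact absurd h hna
          have hnP : ¬ (((univ : Finset (Fin r)).filter
              (fun j => β (j.val * n + i) = true)).card % 2 = 1) := by
            simp only [ha] at haf
            exact of_decide_eq_false haf
          have : ((univ : Finset (Fin r)).filter
              (fun j => β (j.val * n + i) = true)).card % 2 = 0 := by omega
          simpa [hc] using this
      have hEns : ¬ clSatBy σ E := by
        rintro ⟨l, hl, hsat⟩
        rw [hE, mem_expansion] at hl
        obtain ⟨l', hl', j, rfl⟩ := hl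
        rw [litSat] at hsat
        cases hσv : σ (j.val * n + l'.1) with
        | none => rw [hσv] at hsat; cases hsat
        | some v =>
          rw [hσv] at hsat
          have : β (j.val * n + l'.1) = v := by simp [hβ, hσv]
          simp only [hc] at hsat
          rw [this] at hsat
          cases v <;> simp at hsat
      refine ⟨restrictClause σ E, ⟨E, ⟨C, hC, c, hcond, hE⟩, hEns, rfl⟩, ?_⟩
      rintro ⟨l, hl, hsat⟩
      rw [restrictClause, Finset.mem_filter] at hl
      obtain ⟨hlE, hlnone⟩ := hl
      rw [hE, mem_expansion] at hlE
      obtain ⟨l', hl', j, rfl⟩ := hlE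
      simp only at hlnone
      have hαβ : α (j.val * n + l'.1) = β (j.val * n + l'.1) := by simp [hβ, hlnone]
      simp only [hc] at hsat
      rw [hαβ] at hsat
      cases h : β (j.val * n + l'.1) <;> rw [h] at hsat <;> simp at hsat
    · -- Minimality of the restriction
      intro τ' hsub
      obtain ⟨D₀, hD₀R, hD₀n⟩ := Set.exists_of_ssubset hsub
      obtain ⟨E₀, ⟨C₀, hC₀, c₀, hc₀cond, rfl⟩, hE₀ns, rfl⟩ := hD₀R
      obtain ⟨a, haS, haF⟩ := crit hmin hC₀
      have hex : ∀ i : ℕ, ∃ g : Fin r → Bool,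
          (i < n → ((univ : Finset (Fin r)).filter (fun j => g j = true)).card % 2 = (a i).toNat) ∧
          (i < n → ∀ (j : Fin r) (v : Bool), σ (j.val * n + i) = some v → g j = v) ∧
          (i ∈ Clause.vars C₀ → g = c₀ i) := by
        intro i
        by_cases hiC : i ∈ Clause.vars C₀
        · refine ⟨c₀ i, fun _ => ?_, fun _ j v hv => hconsGen C₀ c₀ hE₀ns i hiC j v hv,
            fun _ => rfl⟩
          obtain ⟨l', hl', hfst⟩ := Finset.mem_image.mp hiC
          have h1 := hc₀cond l' hl'
          have h2 := haF l' hl'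
          rw [hfst] at h1 h2
          cases hb : l'.2 <;> rw [hb] at h1 h2
          · have hab : a i = true := by
              cases h : a i
              · exact absurd h h2
              · rfl
            rw [hab]
            simpa using h1
          · have hab : a i = false := by
              cases h : a i
              · rfl
              · exact absurd h h2
            rw [hab]
            simpa using h1
        · by_cases hi : i < n
          · obtain ⟨g, hg1, hg2⟩ := chooser i hi (a i).toNat (by cases a i <;> simp)
            exact ⟨g, fun _ => hg1, fun _ => hg2, fun h => absurd h hiC⟩
          · exact ⟨fun _ => false, fun h => absurd h hi, fun h => absurd h hi,
              fun h => absurd h hiC⟩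
      choose w hw1 hw2 hw3 using hex
      obtain ⟨α, hα⟩ : ∃ α : Var → Bool, ∀ x,
          α x = if h : x / n < r then w (x % n) ⟨x / n, h⟩ else false := ⟨_, fun _ => rfl⟩
      obtain ⟨β, hβ⟩ : ∃ β : Var → Bool, ∀ x, β x = (σ x).getD (α x) := ⟨_, fun _ => rfl⟩
      have hβw : ∀ i, i < n → ∀ j : Fin r, β (j.val * n + i) = w i j := by
        intro i hi j
        have hn : 0 < n := by omega
        have hmod : (j.val * n + i) % n = i := by
          rw [Nat.add_comm, Nat.add_mul_mod_self_right, Nat.mod_eq_of_lt hi]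
        have hdiv : (j.val * n + i) / n = j.val := by
          rw [Nat.mul_comm, Nat.mul_add_div hn, Nat.div_eq_of_lt hi, Nat.add_zero]
        cases hσv : σ (j.val * n + i) with
        | some v =>
          have h1 : β (j.val * n + i) = v := by rw [hβ, hσv]; rfl
          rw [h1, hw2 i hi j v hσv]
        | none =>
          have h1 : β (j.val * n + i) = α (j.val * n + i) := by rw [hβ, hσv]; rfl
          rw [h1, hα]
          simp only [hmod, hdiv]
          rw [dif_pos j.isLt]
      refine ⟨α, ?_⟩
      intro D' hD'
      have hD'R := hsub.1 hD'
      obtain ⟨E', ⟨C', hC', c', hc'cond, rfl⟩, hE'ns, hD'eq⟩ := hD'R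
      rw [hD'eq]
      by_cases hCC : C' = C₀
      · subst hCC
        by_cases hsame : ∀ i ∈ Clause.vars C', ∀ j : Fin r,
            σ (j.val * n + i) = none → c' i j = c₀ i j
        · exfalso
          apply hD₀n
          have hcc : ∀ l ∈ C', ∀ j : Fin r, c' l.1 j = c₀ l.1 j := by
            intro l hl j
            have hi : l.1 ∈ Clause.vars C' := Finset.mem_image_of_mem _ hl
            cases hσv : σ (j.val * n + l.1) with
            | none => exact hsame _ hi j hσv
            | some v =>
              rw [hconsGen C' c' hE'ns _ hi j v hσv, hconsGen C' c₀ hE₀ns _ hi j v hσv]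
          have hEE : (C'.biUnion fun l => (Finset.univ : Finset (Fin r)).image
                (fun j : Fin r => (j.val * n + l.1, ! c₀ l.1 j)))
              = C'.biUnion fun l => (Finset.univ : Finset (Fin r)).image
                (fun j : Fin r => (j.val * n + l.1, ! c' l.1 j)) := by
            refine Finset.biUnion_congr rfl (fun l hl => ?_)
            congr 1
            funext j
            rw [hcc l hl j]
          have hre : restrictClause σ (C'.biUnion fun l =>
                (Finset.univ : Finset (Fin r)).image
                  (fun j : Fin r => (j.val * n + l.1, ! c₀ l.1 j)))
              = restrictClause σ (C'.biUnion fun l =>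
                (Finset.univ : Finset (Fin r)).image
                  (fun j : Fin r => (j.val * n + l.1, ! c' l.1 j))) := by rw [hEE]
          rw [hre, ← hD'eq]
          exact hD'
        · push_neg at hsame
          obtain ⟨i, hiC, j, hσn, hne⟩ := hsame
          obtain ⟨l', hl', hfst⟩ := Finset.mem_image.mp hiC
          have hi : i < n := hvars C' hC' i hiC
          refine ⟨(j.val * n + i, ! c' i j), ?_, ?_⟩
          · refine Finset.mem_filter.mpr ⟨?_, ?_⟩
            · exact mem_expansion.mpr ⟨l', hl', j, by rw [hfst]⟩
            · simpa using hσn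
          · show α (j.val * n + i) = ! c' i j
            have hβv : β (j.val * n + i) = α (j.val * n + i) := by rw [hβ, hσn]; rfl
            have h2 := hβw i hi j
            have h3 : w i j = c₀ i j := by rw [hw3 i hiC]
            have h4 : c₀ i j = ! c' i j := bool_ne_iff hne
            rw [← hβv, h2, h3, h4]
      · obtain ⟨l₀, hl₀, hal⟩ := haS C' hC' hCC
        have hiC : l₀.1 ∈ Clause.vars C' := Finset.mem_image_of_mem _ hl₀
        have hi : l₀.1 < n := hvars C' hC' l₀.1 hiC
        by_cases hsame : ∀ j : Fin r, c' l₀.1 j = w l₀.1 j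
        · exfalso
          have h1 := hc'cond l₀ hl₀
          have h2 := hw1 l₀.1 hi
          have hfe : ((univ : Finset (Fin r)).filter (fun j => c' l₀.1 j = true))
              = (univ : Finset (Fin r)).filter (fun j => w l₀.1 j = true) :=
            Finset.filter_congr (fun j _ => by rw [hsame j])
          rw [hfe] at h1
          cases hb : l₀.2 <;> rw [hb] at h1 hal <;> rw [hal] at h2
          all_goals simp at h1 h2
          all_goals omega
        · push_neg at hsame
          obtain ⟨j, hne⟩ := hsame
          have hσn : σ (j.val * n + l₀.1) = none := by
            cases hσv : σ (j.val * n + l₀.1) with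
            | none => rfl
            | some v =>
              exact absurd (by
                rw [hconsGen C' c' hE'ns l₀.1 hiC j v hσv, hw2 l₀.1 hi j v hσv]) hne
          refine ⟨(j.val * n + l₀.1, ! c' l₀.1 j),
            Finset.mem_filter.mpr ⟨mem_expansion.mpr ⟨l₀, hl₀, j, rfl⟩, by simpa using hσn⟩, ?_⟩
          show α (j.val * n + l₀.1) = ! c' l₀.1 j
          have hβv : β (j.val * n + l₀.1) = α (j.val * n + l₀.1) := by rw [hβ, hσn]; rfl
          have h2 := hβw l₀.1 hi j
          have h4 : w l₀.1 j = ! c' l₀.1 j := bool_ne_iff hne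
          rw [← hβv, h2, h4]
  · -- every assigned variable occurs in an unsatisfied clause
    intro x hx
    have hxlt : x < r * n := hσ1 x hx
    have hn : 0 < n := by
      rcases Nat.eq_zero_or_pos n with h | h
      · exfalso
        rw [h, Nat.mul_zero] at hxlt
        exact Nat.not_lt_zero x hxlt
      · exact h
    have hi : x % n < n := Nat.mod_lt x hn
    have hj : x / n < r := by
      rw [Nat.div_lt_iff_lt_mul hn]
      exact hxlt
    obtain ⟨C, hC, hiC⟩ := hall (x % n) hi
    have hex : ∀ i' : ℕ, ∃ g : Fin r → Bool, i' < n →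
        (((univ : Finset (Fin r)).filter (fun j => g j = true)).card % 2
          = (if (i', true) ∈ C then 0 else 1)) ∧
        ∀ (j : Fin r) (v : Bool), σ (j.val * n + i') = some v → g j = v := by
      intro i'
      by_cases hi' : i' < n
      · obtain ⟨g, h1, h2⟩ := chooser i' hi' (if (i', true) ∈ C then 0 else 1)
          (by split <;> omega)
        exact ⟨g, fun _ => ⟨h1, h2⟩⟩
      · exact ⟨fun _ => false, fun h => absurd h hi'⟩
    choose c hcp using hex
    refine ⟨C.biUnion (fun l => (Finset.univ : Finset (Fin r)).image
        (fun j : Fin r => (j.val * n + l.1, ! c l.1 j))), ⟨C, hC, c, ?_, rfl⟩, ?_, ?_⟩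
    · rintro ⟨lv, lb⟩ hl
      have hlv : lv < n := hvars C hC lv (Finset.mem_image_of_mem _ hl)
      have h1 := (hcp lv hlv).1
      cases lb
      · have ht : (lv, true) ∉ C := fun h => no_taut hmin hC lv ⟨h, hl⟩
        rw [if_neg ht] at h1
        simpa using h1
      · rw [if_pos hl] at h1
        simpa using h1
    · rintro ⟨l, hl, hsat⟩
      rw [mem_expansion] at hl
      obtain ⟨l', hl', j, rfl⟩ := hl
      have hlv : l'.1 < n := hvars C hC l'.1 (Finset.mem_image_of_mem _ hl')
      rw [litSat] at hsat
      cases hσv : σ (j.val * n + l'.1) with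
      | none => rw [hσv] at hsat; cases hsat
      | some v =>
        have := (hcp l'.1 hlv).2 j v hσv
        rw [hσv] at hsat
        rw [this] at hsat
        cases v <;> simp at hsat
    · obtain ⟨l', hl', hfst⟩ := Finset.mem_image.mp hiC
      have hxe : x = (x / n) * n + x % n := by
        rw [Nat.mul_comm]
        exact (Nat.div_add_mod x n).symm
      refine Finset.mem_image.mpr
        ⟨((⟨x / n, hj⟩ : Fin r).val * n + l'.1, ! c l'.1 ⟨x / n, hj⟩), ?_, ?_⟩
      · exact mem_expansion.mpr ⟨l', hl', ⟨x / n, hj⟩, rfl⟩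
      · show (x / n) * n + l'.1 = x
        rw [hfst, ← hxe]
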